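/- Let m ≥ 4 be even, h = m/2, n = q^m - 1. For every integer a with q^h ≤ a ≤ q^{h+1}, the q-cyclotomic coset C_a modulo n has cardinality m/2 if a = c(q^h + 1) for some 1 ≤ c ≤ q - 1, and cardinality m otherwise. -/

import Mathlib

/-- The q-cyclotomic coset of a modulo n: {a * q^j mod n : j ≥ 0}. -/
def cyclCoset (q n a : ℕ) : Finset ℕ :=
  (Finset.range n).image (fun j => a * q ^ j % n)

/-- a is the coset leader (smallest element) of its q-cyclotomic coset modulo n. -/
def IsCosetLeader (q n a : ℕ) : Prop :=
  ∀ j : ℕ, a ≤ a * q ^ j % n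

lemma cyclCoset_bridge (q n a i : ℕ) (hq : 1 ≤ q) :
    a * q ^ i % n = a % n ↔ n ∣ a * (q ^ i - 1) := by
  have h1 : 1 ≤ q ^ i := Nat.one_le_pow _ _ hq
  have h2 : a ≤ a * q ^ i := Nat.le_mul_of_pos_right a h1
  have h3 : a * q ^ i - a = a * (q ^ i - 1) := by
    rw [Nat.mul_sub, Nat.mul_one]
  constructor
  · intro h
    have : a ≡ a * q ^ i [MOD n] := h.symm
    rw [Nat.modEq_iff_dvd' h2] at this
    rwa [h3] at this
  · intro h
    have : a ≡ a * q ^ i [MOD n] := (Nat.modEq_iff_dvd' h2).2 (by rwa [h3])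
    exact this.symm

lemma cyclCoset_card (q n a l : ℕ) (hn : 0 < n) (hl : 0 < l) (hln : l ≤ n)
    (hcop : Nat.Coprime q n)
    (hper : a * q ^ l % n = a % n)
    (hmin : ∀ i, 0 < i → i < l → a * q ^ i % n ≠ a % n) :
    (cyclCoset q n a).card = l := by
  set f : ℕ → ℕ := fun j => a * q ^ j % n with hf
  have key : ∀ j, f (j + l) = f j := by
    intro j
    show a * q ^ (j + l) % n = a * q ^ j % n
    have e : a * q ^ (j + l) = a * q ^ l * q ^ j := by rw [pow_add]; ring
    rw [e, Nat.mul_mod, hper, ← Nat.mul_mod]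
  have haux : ∀ k r, f (r + l * k) = f r := by
    intro k
    induction k with
    | zero => simp
    | succ k ih =>
      intro r
      have e : r + l * (k + 1) = (r + l * k) + l := by ring
      rw [e, key, ih]
  have hperiodic : ∀ j, f j = f (j % l) := by
    intro j
    conv_lhs => rw [← Nat.mod_add_div j l]
    exact haux (j / l) (j % l)
  have himg : (Finset.range n).image f = (Finset.range l).image f := by
    apply Finset.Subset.antisymm
    · intro x hx
      simp only [Finset.mem_image, Finset.mem_range] at *
      obtain ⟨j, _, rfl⟩ := hx
      exact ⟨j % l, Nat.mod_lt j hl, (hperiodic j).symm⟩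
    · exact Finset.image_subset_image (Finset.range_subset_range.2 hln)
  have hne : ∀ i j, i < j → j < l → f i ≠ f j := by
    intro i j hij hjl hEq
    have hmod : a * q ^ i ≡ a * q ^ j [MOD n] := hEq
    have e : a * q ^ j = a * q ^ (j - i) * q ^ i := by
      rw [mul_assoc, ← pow_add]
      congr 2
      omega
    rw [e] at hmod
    have hcop' : Nat.gcd n (q ^ i) = 1 :=
      Nat.Coprime.symm (Nat.Coprime.pow_left _ hcop)
    have hc : a ≡ a * q ^ (j - i) [MOD n] := by
      have := Nat.ModEq.cancel_right_of_coprime hcop' (a := a) (b := a * q ^ (j - i)) ?_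
      · exact this
      · exact hmod
    exact hmin (j - i) (by omega) (by omega) hc.symm
  have hinj : Set.InjOn f (Finset.range l) := by
    intro i hi j hj hij
    simp only [Finset.coe_range, Set.mem_Iio] at hi hj
    rcases lt_trichotomy i j with h' | h' | h'
    · exact absurd hij (hne i j h' hj)
    · exact h'
    · exact absurd hij.symm (hne j i h' hi)
  show ((Finset.range n).image f).card = l
  rw [himg, Finset.card_image_of_injOn hinj, Finset.card_range]

theorem stmt_9 (q m : ℕ) (hq : IsPrimePow q) (hm : Even m) (hm4 : 4 ≤ m) (a : ℕ)
    (ha1 : q ^ (m / 2) ≤ a) (ha2 : a ≤ q ^ (m / 2 + 1)) :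
    ((∃ c : ℕ, 1 ≤ c ∧ c ≤ q - 1 ∧ a = c * (q ^ (m / 2) + 1)) →
      (cyclCoset q (q ^ m - 1) a).card = m / 2) ∧
    ((¬ ∃ c : ℕ, 1 ≤ c ∧ c ≤ q - 1 ∧ a = c * (q ^ (m / 2) + 1)) →
      (cyclCoset q (q ^ m - 1) a).card = m) := by
  have hq2 : 2 ≤ q := hq.two_le
  set h := m / 2 with hh
  have hm2 : m = 2 * h := by
    have := Nat.div_two_mul_two_of_even hm
    omega
  have hh2 : 2 ≤ h := by omega
  set n := q ^ m - 1 with hn_def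
  have hqm1 : 1 ≤ q ^ m := Nat.one_le_pow _ _ (by omega)
  have h2m : 2 ^ m ≤ q ^ m := Nat.pow_le_pow_left hq2 m
  have hmlt : m < 2 ^ m := Nat.lt_two_pow_self
  have hn : 0 < n := by
    have : 2 ^ m ≤ q ^ m := h2m
    have : (16 : ℕ) ≤ 2 ^ m := by
      calc (16 : ℕ) = 2 ^ 4 := by norm_num
      _ ≤ 2 ^ m := Nat.pow_le_pow_right (by norm_num) hm4
    omega
  have hmn : m ≤ n := by omega
  -- a < n
  have hpow_hm : q ^ (h + 2) ≤ q ^ m := Nat.pow_le_pow_right (by omega) (by omega)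
  have hq_h1 : 2 ≤ q ^ (h + 1) := by
    calc 2 ≤ q := hq2
    _ = q ^ 1 := (pow_one q).symm
    _ ≤ q ^ (h + 1) := Nat.pow_le_pow_right (by omega) (by omega)
  have hpow_split : q ^ (h + 2) = q ^ (h + 1) * q := by rw [pow_succ]
  have han : a < n := by
    have : 2 * q ^ (h + 1) ≤ q ^ (h + 1) * q := by nlinarith
    omega
  have hamod : a % n = a := Nat.mod_eq_of_lt han
  have ha_pos : 0 < a := by
    have : 1 ≤ q ^ h := Nat.one_le_pow _ _ (by omega)
    omega
  -- coprimality
  have hcop : Nat.Coprime q n := by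
    have h1 : Nat.gcd q n ∣ q ^ m := (Nat.gcd_dvd_left q n).trans (dvd_pow_self q (by omega))
    have h2 : Nat.gcd q n ∣ n := Nat.gcd_dvd_right q n
    have h3 : Nat.gcd q n ∣ q ^ m - n := Nat.dvd_sub h1 h2
    have h4 : q ^ m - n = 1 := by omega
    rw [h4] at h3
    exact Nat.eq_one_of_dvd_one h3
  -- P m holds
  have hPm : a * q ^ m % n = a % n := by
    have e : q ^ m = n + 1 := by omega
    rw [e, Nat.mul_add, Nat.mul_one, Nat.add_comm, Nat.add_mul_mod_self_right]
  -- P is closed under k * i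
  have hPmul : ∀ i, a * q ^ i % n = a % n → ∀ k, a * q ^ (k * i) % n = a % n := by
    intro i hPi k
    induction k with
    | zero => simp
    | succ k ih =>
      have e : a * q ^ ((k + 1) * i) = a * q ^ (k * i) * q ^ i := by
        rw [mul_assoc, ← pow_add]
        congr 2
        ring
      rw [e, Nat.mul_mod, ih, ← Nat.mul_mod, hPi]
  -- P is closed under subtraction
  have hPsub : ∀ j s, s ≤ j → a * q ^ j % n = a % n → a * q ^ s % n = a % n →
      a * q ^ (j - s) % n = a % n := by
    intro j s hsj hPj hPs
    have e : a * q ^ j = a * q ^ (j - s) * q ^ s := by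
      rw [mul_assoc, ← pow_add]
      congr 2
      omega
    have hmod : a * q ^ (j - s) * q ^ s ≡ a * q ^ s [MOD n] := by
      have h1 : a * q ^ j ≡ a [MOD n] := hPj
      have h2 : a ≡ a * q ^ s [MOD n] := (Nat.ModEq.symm hPs)
      calc a * q ^ (j - s) * q ^ s = a * q ^ j := e.symm
      _ ≡ a [MOD n] := h1
      _ ≡ a * q ^ s [MOD n] := h2
    have hcop' : Nat.gcd n (q ^ s) = 1 := Nat.Coprime.symm (Nat.Coprime.pow_left _ hcop)
    exact Nat.ModEq.cancel_right_of_coprime hcop' hmod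
  -- P is closed under gcd
  have hPgcd : ∀ i j, a * q ^ i % n = a % n → a * q ^ j % n = a % n →
      a * q ^ (Nat.gcd i j) % n = a % n := by
    intro i j
    induction i, j using Nat.gcd.induction with
    | H0 j => intro _ hj; simpa using hj
    | H1 i j hi ih =>
      intro hPi hPj
      rw [Nat.gcd_rec]
      apply ih _ hPi
      have hmd : j % i = j - (j / i) * i := by
        have h1 := Nat.mod_add_div j i
        have h2 : i * (j / i) = (j / i) * i := Nat.mul_comm _ _
        omega
      rw [hmd]
      exact hPsub j ((j / i) * i) (Nat.div_mul_le_self j i) hPj (hPmul i hPi (j / i))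
  -- factorization identity
  have hfac : q ^ m - 1 = (q ^ h - 1) * (q ^ h + 1) := by
    have hx : 1 ≤ q ^ h := Nat.one_le_pow _ _ (by omega)
    obtain ⟨y, hy⟩ := Nat.exists_eq_add_of_le hx
    have hqm : q ^ m = q ^ h * q ^ h := by
      rw [← pow_add]; congr 1; omega
    rw [hqm, hy]
    have e : (1 + y) * (1 + y) = (1 + y - 1) * (1 + y + 1) + 1 := by
      have : 1 + y - 1 = y := by omega
      rw [this]; ring
    omega
  -- key divisor analysis
  have hdiv : ∀ d, 0 < d → d < m → d ∣ m → n ∣ a * (q ^ d - 1) →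
      d = h ∧ (q ^ h + 1) ∣ a := by
    intro d hd0 hdm hddvd hdvd
    obtain ⟨k, hk⟩ := hddvd
    have hk2 : 2 ≤ k := by
      rcases Nat.lt_or_ge k 2 with hk' | hk'
      · interval_cases k <;> omega
      · exact hk'
    have hdh : d ≤ h := by nlinarith
    -- (q^d - 1) ∣ q^m - 1, with quotient S
    have hqd1 : 2 ≤ q ^ d := by
      calc 2 ≤ q := hq2
      _ = q ^ 1 := (pow_one q).symm
      _ ≤ q ^ d := Nat.pow_le_pow_right (by omega) hd0
    have hdvdpow : (q ^ d - 1) ∣ (q ^ m - 1) := by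
      have := Nat.sub_dvd_pow_sub_pow (q ^ d) 1 k
      simpa [← pow_mul, ← hk] using this
    obtain ⟨S, hS⟩ := hdvdpow
    -- S ∣ a
    have hSa : S ∣ a := by
      obtain ⟨t, ht⟩ := hdvd
      refine ⟨t, ?_⟩
      have hmul : (q ^ d - 1) * a = (q ^ d - 1) * (S * t) := by
        have e1 : a * (q ^ d - 1) = (q ^ d - 1) * a := by ring
        have e2 : n = (q ^ d - 1) * S := hS
        calc (q ^ d - 1) * a = a * (q ^ d - 1) := by ring
        _ = n * t := ht
        _ = (q ^ d - 1) * (S * t) := by rw [e2]; ring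
      exact Nat.eq_of_mul_eq_mul_left (by omega) hmul
    have hSle : S ≤ a := Nat.le_of_dvd ha_pos hSa
    -- rule out d < h
    have hdeq : d = h := by
      by_contra hne
      have hdlt : d < h := by omega
      have hbound : q ^ m - 1 ≤ (q ^ d - 1) * q ^ (h + 1) := by
        calc q ^ m - 1 = (q ^ d - 1) * S := hS
        _ ≤ (q ^ d - 1) * q ^ (h + 1) := Nat.mul_le_mul_left _ (le_trans hSle ha2)
      have hsm : (q ^ d - 1) * q ^ (h + 1) = q ^ (d + h + 1) - q ^ (h + 1) := by
        rw [Nat.sub_mul, one_mul, ← pow_add]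
        congr 2 <;> omega
      have hle : q ^ (d + h + 1) ≤ q ^ m := Nat.pow_le_pow_right (by omega) (by omega)
      have hle2 : q ^ (h + 1) ≤ q ^ m := Nat.pow_le_pow_right (by omega) (by omega)
      omega
    rw [hdeq] at hS hqd1
    have hSeq : S = q ^ h + 1 := by
      have heq : (q ^ h - 1) * S = (q ^ h - 1) * (q ^ h + 1) := by
        rw [← hS, hfac]
      exact Nat.eq_of_mul_eq_mul_left (by omega) heq
    exact ⟨hdeq, hSeq ▸ hSa⟩
  constructor
  · -- case 1 : a = c (q^h + 1), card = h
    rintro ⟨c, hc1, hc2, rfl⟩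
    have hper : c * (q ^ h + 1) * q ^ h % n = c * (q ^ h + 1) % n := by
      rw [cyclCoset_bridge _ _ _ _ (by omega)]
      refine ⟨c, ?_⟩
      rw [hn_def, hfac]
      ring
    apply cyclCoset_card q n _ h hn (by omega) (by omega) hcop hper
    intro i hi0 hih hPi
    have hPd := hPgcd i m hPi hPm
    set d := Nat.gcd i m with hd
    have hd0 : 0 < d := Nat.gcd_pos_of_pos_left m hi0
    have hdi : d ≤ i := Nat.le_of_dvd hi0 (Nat.gcd_dvd_left i m)
    have hdm : d ∣ m := Nat.gcd_dvd_right i m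
    have := hdiv d hd0 (by omega) hdm ((cyclCoset_bridge q n _ d (by omega)).1 hPd)
    omega
  · -- case 2 : card = m
    intro hnex
    apply cyclCoset_card q n _ m hn (by omega) hmn hcop hPm
    intro i hi0 him hPi
    have hPd := hPgcd i m hPi hPm
    set d := Nat.gcd i m with hd
    have hd0 : 0 < d := Nat.gcd_pos_of_pos_left m hi0
    have hdi : d ≤ i := Nat.le_of_dvd hi0 (Nat.gcd_dvd_left i m)
    have hdm : d ∣ m := Nat.gcd_dvd_right i m
    obtain ⟨-, hdvd_a⟩ := hdiv d hd0 (by omega) hdm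
      ((cyclCoset_bridge q n _ d (by omega)).1 hPd)
    obtain ⟨c, hc⟩ := hdvd_a
    apply hnex
    refine ⟨c, ?_, ?_, by rw [hc]; ring⟩
    · rcases Nat.eq_zero_or_pos c with rfl | h'
      · simp at hc; omega
      · exact h'
    · -- c ≤ q - 1
      by_contra hcq
      have hcq' : q ≤ c := by omega
      have : (q ^ h + 1) * q ≤ (q ^ h + 1) * c := Nat.mul_le_mul_left _ hcq'
      have he : (q ^ h + 1) * q = q ^ (h + 1) + q := by rw [pow_succ]; ring
      omega
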